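/- Let q and p be prime numbers such that p divides q − 1, let n be a positive integer, and let c be a permutation in the symmetric group S_n of order q. Let γ be an integer whose class in the multiplicative group (Z/(q))* has order p. Then there exists a permutation f ∈ S_n of order p such that f·c·f⁻¹ = c^γ. -/

import Mathlib

set_option linter.unusedSectionVars false

namespace Stmt19Aux

variable {n : ℕ}

/-- Orbit equivalence under the cyclic group generated by `c`. -/
def orbSetoid (c : Equiv.Perm (Fin n)) : Setoid (Fin n) where
  r x y := ∃ k : ℤ, (c ^ k) y = x
  iseqv := by
    refine ⟨fun x => ⟨0, rfl⟩, ?_, ?_⟩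
    · rintro x y ⟨k, rfl⟩
      exact ⟨-k, by rw [← Equiv.Perm.mul_apply, ← zpow_add, neg_add_cancel, zpow_zero,
        Equiv.Perm.one_apply]⟩
    · rintro x y z ⟨k, rfl⟩ ⟨l, rfl⟩
      exact ⟨k + l, by rw [zpow_add, Equiv.Perm.mul_apply]⟩

/-- A representative of the `c`-orbit of `x`. -/
noncomputable def rep (c : Equiv.Perm (Fin n)) (x : Fin n) : Fin n :=
  (Quotient.mk (orbSetoid c) x).out

lemma rep_spec (c : Equiv.Perm (Fin n)) (x : Fin n) :
    ∃ k : ℤ, (c ^ k) (rep c x) = x := by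
  obtain ⟨k, hk⟩ := Quotient.mk_out (s := orbSetoid c) x
  have hk' : (c ^ k) x = rep c x := hk
  refine ⟨-k, ?_⟩
  rw [← hk', ← Equiv.Perm.mul_apply, ← zpow_add, neg_add_cancel, zpow_zero,
    Equiv.Perm.one_apply]

lemma rep_zpow (c : Equiv.Perm (Fin n)) (m : ℤ) (x : Fin n) :
    rep c ((c ^ m) x) = rep c x :=
  congrArg Quotient.out (Quotient.sound ⟨m, rfl⟩)

lemma rep_rep (c : Equiv.Perm (Fin n)) (x : Fin n) :
    rep c (rep c x) = rep c x := by
  unfold rep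
  rw [Quotient.out_eq]

/-- The "discrete logarithm" of `x` w.r.t. the representative of its orbit, mod `q`. -/
noncomputable def kap (c : Equiv.Perm (Fin n)) (q : ℕ) (x : Fin n) : ZMod q :=
  ((rep_spec c x).choose : ZMod q)

lemma valcast {q : ℕ} [NeZero q] (w : ZMod q) : (((w.val : ℕ) : ℤ) : ZMod q) = w := by
  simp [ZMod.natCast_val, ZMod.cast_id]

lemma c_zpow_comm (c : Equiv.Perm (Fin n)) (m : ℤ) (x : Fin n) :
    c ((c ^ m) x) = (c ^ m) (c x) := by
  rw [← Equiv.Perm.mul_apply, ← Equiv.Perm.mul_apply, ← zpow_one_add, ← zpow_add_one, add_comm]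

lemma moving_zpow (c : Equiv.Perm (Fin n)) (m : ℤ) (x : Fin n) (hx : c x ≠ x) :
    c ((c ^ m) x) ≠ (c ^ m) x := by
  intro h
  rw [c_zpow_comm] at h
  exact hx ((c ^ m).injective h)

section

variable {q : ℕ} (hq : q.Prime) (c : Equiv.Perm (Fin n)) (hc : orderOf c = q)

include hq hc

/-- Powers of `c` only depend on the exponent mod `q`. -/
lemma zpow_congr (m m' : ℤ) (h : (m : ZMod q) = (m' : ZMod q)) : c ^ m = c ^ m' := by
  have hd : ((q : ℤ)) ∣ m' - m := by
    rw [ZMod.intCast_eq_intCast_iff] at h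
    exact Int.ModEq.dvd h
  have h1 : c ^ (m' - m) = 1 := by
    rw [← orderOf_dvd_iff_zpow_eq_one, hc]
    exact hd
  calc c ^ m = c ^ m * c ^ (m' - m) := by rw [h1, mul_one]
    _ = c ^ (m + (m' - m)) := (zpow_add c m (m' - m)).symm
    _ = c ^ m' := by ring_nf

/-- If `x` is moved by `c` and `c^m` fixes `x`, then `q ∣ m`. -/
lemma moving_dvd (x : Fin n) (hx : c x ≠ x) (m : ℤ) (hm : (c ^ m) x = x) :
    ((q : ℤ)) ∣ m := by
  by_contra hnd
  have hcop : IsCoprime ((q : ℤ)) m := by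
    rw [Int.isCoprime_iff_gcd_eq_one]
    have h2 : ¬ q ∣ m.natAbs := by
      intro h
      exact hnd (Int.natCast_dvd_natCast.mpr h |>.trans (Int.natAbs_dvd.mpr dvd_rfl))
    exact hq.coprime_iff_not_dvd.mpr h2
  obtain ⟨a, b, hab⟩ := hcop
  have hq1 : c ^ ((q : ℤ)) = 1 := by
    rw [← orderOf_dvd_iff_zpow_eq_one, hc]
  have h1 : (c ^ (a * (q : ℤ) + b * m)) x = x := by
    rw [zpow_add, Equiv.Perm.mul_apply]
    have hbm : (c ^ (b * m)) x = x := by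
      rw [mul_comm, zpow_mul]
      exact Function.IsFixedPt.perm_zpow hm b
    rw [hbm, mul_comm, zpow_mul, hq1, one_zpow, Equiv.Perm.one_apply]
  rw [hab, zpow_one] at h1
  exact hx h1

omit hq hc in
lemma rep_moving (x : Fin n) (hx : c x ≠ x) : c (rep c x) ≠ rep c x := by
  obtain ⟨k, hk⟩ := rep_spec c x
  intro h
  apply hx
  have h2 : c ((c ^ k) (rep c x)) = (c ^ k) (c (rep c x)) := c_zpow_comm c k _
  rw [hk, h, hk] at h2
  exact h2

lemma kap_unique (x : Fin n) (hx : c x ≠ x) (m : ℤ) (hm : (c ^ m) (rep c x) = x) :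
    (m : ZMod q) = kap c q x := by
  have hk := (rep_spec c x).choose_spec
  set k := (rep_spec c x).choose with hkdef
  have hk' : (c ^ (-k)) x = rep c x := by
    conv_lhs => rw [← hk]
    rw [← Equiv.Perm.mul_apply, ← zpow_add, neg_add_cancel, zpow_zero, Equiv.Perm.one_apply]
  have hfix : (c ^ (m - k)) (rep c x) = rep c x := by
    rw [show m - k = -k + m by ring, zpow_add, Equiv.Perm.mul_apply, hm, hk']
  have hd : ((q : ℤ)) ∣ m - k :=
    moving_dvd hq c hc (rep c x) (rep_moving c x hx) (m - k) hfix
  have heq : (m : ZMod q) = (k : ZMod q) := by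
    rw [ZMod.intCast_eq_intCast_iff]
    exact (Int.modEq_iff_dvd.mpr hd).symm
  rw [heq]
  rfl

lemma kap_spec (x : Fin n) :
    (c ^ (((kap c q x).val : ℕ) : ℤ)) (rep c x) = x := by
  haveI : NeZero q := ⟨hq.ne_zero⟩
  have hcast : ((((kap c q x).val : ℕ) : ℤ) : ZMod q) = ((rep_spec c x).choose : ZMod q) := by
    rw [valcast]
    rfl
  rw [zpow_congr hq c hc _ _ hcast]
  exact (rep_spec c x).choose_spec

end

/-- Multiplication by `v` on each orbit. -/
noncomputable def F (c : Equiv.Perm (Fin n)) (q : ℕ) (v : ZMod q) (x : Fin n) : Fin n :=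
  (c ^ (((v * kap c q x).val : ℕ) : ℤ)) (rep c x)

section

variable {q : ℕ} (hq : q.Prime) (c : Equiv.Perm (Fin n)) (hc : orderOf c = q)

include hq hc

omit hq hc in
lemma F_fixed (x : Fin n) (hx : c x = x) (v : ZMod q) : F c q v x = x := by
  have hrx : rep c x = x := by
    obtain ⟨l, hl⟩ := Quotient.mk_out (s := orbSetoid c) x
    have hl' : (c ^ l) x = rep c x := hl
    rw [← hl']
    exact Function.IsFixedPt.perm_zpow hx l
  show (c ^ _) (rep c x) = x
  rw [hrx]
  exact Function.IsFixedPt.perm_zpow hx _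

omit hq hc in
lemma F_moving (x : Fin n) (hx : c x ≠ x) (v : ZMod q) : c (F c q v x) ≠ F c q v x := by
  show c ((c ^ _) (rep c x)) ≠ (c ^ _) (rep c x)
  exact moving_zpow c _ _ (rep_moving c x hx)

omit hq hc in
lemma rep_F (x : Fin n) (v : ZMod q) : rep c (F c q v x) = rep c x := by
  show rep c ((c ^ _) (rep c x)) = rep c x
  rw [rep_zpow, rep_rep]

lemma kap_F (x : Fin n) (hx : c x ≠ x) (v : ZMod q) :
    kap c q (F c q v x) = v * kap c q x := by
  haveI : NeZero q := ⟨hq.ne_zero⟩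
  have h := kap_unique hq c hc (F c q v x) (F_moving c x hx v)
    ((((v * kap c q x).val : ℕ) : ℤ)) (by rw [rep_F]; rfl)
  rw [← h, valcast]

lemma F_comp (v w : ZMod q) (x : Fin n) :
    F c q v (F c q w x) = F c q (v * w) x := by
  by_cases hx : c x = x
  · rw [F_fixed c x hx w, F_fixed c x hx v, F_fixed c x hx (v * w)]
  · have hr := rep_F c (F c q w x) v
    show (c ^ (((v * kap c q (F c q w x)).val : ℕ) : ℤ)) (rep c (F c q w x)) = _
    rw [rep_F c x w, kap_F hq c hc x hx w, ← mul_assoc]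
    rfl

lemma F_one (x : Fin n) : F c q 1 x = x := by
  show (c ^ (((1 * kap c q x).val : ℕ) : ℤ)) (rep c x) = x
  rw [one_mul]
  exact kap_spec hq c hc x

lemma F_c (v : ZMod q) (x : Fin n) :
    F c q v (c x) = (c ^ ((v.val : ℕ) : ℤ)) (F c q v x) := by
  haveI : NeZero q := ⟨hq.ne_zero⟩
  by_cases hx : c x = x
  · rw [hx, F_fixed c x hx v]
    exact (Function.IsFixedPt.perm_zpow hx _).symm
  · have hcx : c (c x) ≠ c x := fun h => hx (c.injective h)
    have hrc : rep c (c x) = rep c x := by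
      have h1 : (c ^ (1 : ℤ)) x = c x := by rw [zpow_one]
      rw [← h1, rep_zpow]
    have hkc : kap c q (c x) = 1 + kap c q x := by
      have hm : (c ^ ((1 : ℤ) + (((kap c q x).val : ℕ) : ℤ))) (rep c (c x)) = c x := by
        rw [hrc, zpow_add, zpow_one, Equiv.Perm.mul_apply, kap_spec hq c hc x]
      have h := kap_unique hq c hc (c x) hcx _ hm
      rw [← h]
      push_cast [ZMod.natCast_val, ZMod.cast_id]
      rfl
    show (c ^ (((v * kap c q (c x)).val : ℕ) : ℤ)) (rep c (c x)) =
      (c ^ ((v.val : ℕ) : ℤ)) ((c ^ (((v * kap c q x).val : ℕ) : ℤ)) (rep c x))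
    rw [hrc, hkc, ← Equiv.Perm.mul_apply, ← zpow_add]
    have hAB : c ^ ((((v * (1 + kap c q x)).val : ℕ)) : ℤ) =
        c ^ (((v.val : ℕ) : ℤ) + (((v * kap c q x).val : ℕ) : ℤ)) := by
      refine zpow_congr hq c hc _ _ ?_
      push_cast [ZMod.natCast_val, ZMod.cast_id]
      ring
    rw [hAB]

end

end Stmt19Aux

open Stmt19Aux in
/-- let `q, p` be primes with `p ∣ q − 1`, let `c ∈ S_n` have order `q`,
and let `γ` be an integer whose class in `(Z/(q))*` has multiplicative order `p`.
Then there is a permutation `f ∈ S_n` of order `p` with `f·c·f⁻¹ = c^γ`. -/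
theorem exists_perm_conjugating_to_power
    (q p : ℕ) (hq : q.Prime) (hp : p.Prime) (hpq : p ∣ q - 1)
    (n : ℕ) (hn : 0 < n)
    (c : Equiv.Perm (Fin n)) (hc : orderOf c = q)
    (γ : ℤ) (u : (ZMod q)ˣ) (huγ : (u : ZMod q) = (γ : ZMod q)) (hu : orderOf u = p) :
    ∃ f : Equiv.Perm (Fin n), orderOf f = p ∧ f * c * f⁻¹ = c ^ γ := by
  haveI : NeZero q := ⟨hq.ne_zero⟩
  haveI : Fact p.Prime := ⟨hp⟩
  set v : ZMod q := ((u : (ZMod q)ˣ) : ZMod q) with hv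
  set v' : ZMod q := ((u⁻¹ : (ZMod q)ˣ) : ZMod q) with hv'
  have hvv' : v' * v = 1 := by rw [hv, hv', ← Units.val_mul, inv_mul_cancel, Units.val_one]
  have hv'v : v * v' = 1 := by rw [hv, hv', ← Units.val_mul, mul_inv_cancel, Units.val_one]
  set f : Equiv.Perm (Fin n) :=
    { toFun := F c q v
      invFun := F c q v'
      left_inv := fun x => by rw [F_comp hq c hc v' v x, hvv', F_one hq c hc x]
      right_inv := fun x => by rw [F_comp hq c hc v v' x, hv'v, F_one hq c hc x] } with hf
  have hfapp : ∀ x, f x = F c q v x := fun _ => rfl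
  have hpow : ∀ (j : ℕ) (x : Fin n), (f ^ j) x = F c q (v ^ j) x := by
    intro j
    induction j with
    | zero => intro x; rw [pow_zero, pow_zero, Equiv.Perm.one_apply, F_one hq c hc x]
    | succ j ih =>
      intro x
      rw [pow_succ, Equiv.Perm.mul_apply, hfapp, ih (F c q v x), F_comp hq c hc _ _ x,
        ← pow_succ]
  -- f^p = 1
  have hfp : f ^ p = 1 := by
    ext x
    rw [hpow p x]
    have hvp : v ^ p = 1 := by
      rw [hv, ← Units.val_pow_eq_pow_val, ← hu, pow_orderOf_eq_one, Units.val_one]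
    rw [hvp, F_one hq c hc x, Equiv.Perm.one_apply]
  -- the conjugation identity (pointwise)
  have hvalγ : c ^ ((v.val : ℕ) : ℤ) = c ^ γ := by
    refine zpow_congr hq c hc _ _ ?_
    rw [valcast]
    exact huγ
  have hconj : ∀ x, f (c x) = (c ^ γ) (f x) := by
    intro x
    rw [hfapp, hfapp, F_c hq c hc v x, hvalγ]
  -- f ≠ 1
  have hfne : f ≠ 1 := by
    intro h1
    have hx : ∃ x, c x ≠ x := by
      by_contra h
      push_neg at h
      have : c = 1 := Equiv.ext h
      rw [this, orderOf_one] at hc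
      exact hq.one_lt.ne' hc.symm
    obtain ⟨x, hx⟩ := hx
    have hid : ∀ y, f y = y := fun y => by rw [h1, Equiv.Perm.one_apply]
    have h2 : c x = (c ^ γ) x := by
      have := hconj x
      rwa [hid (c x), hid x] at this
    have h3 : (c ^ (γ - 1)) x = x := by
      rw [show γ - 1 = -1 + γ by ring, zpow_add, Equiv.Perm.mul_apply, ← h2, zpow_neg, zpow_one,
        Equiv.Perm.inv_def, Equiv.symm_apply_apply]
    have hd : ((q : ℤ)) ∣ γ - 1 := moving_dvd hq c hc x hx (γ - 1) h3
    have hγ1 : (γ : ZMod q) = ((1 : ℤ) : ZMod q) := by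
      rw [ZMod.intCast_eq_intCast_iff]
      exact (Int.modEq_iff_dvd.mpr (by simpa using hd)).symm
    have hu1 : u = 1 := by
      ext
      rw [← hv, huγ, hγ1]
      simp
    rw [hu1, orderOf_one] at hu
    exact hp.one_lt.ne' hu.symm
  refine ⟨f, orderOf_eq_prime hfp hfne, ?_⟩
  rw [mul_inv_eq_iff_eq_mul]
  exact Equiv.ext fun x => by
    rw [Equiv.Perm.mul_apply, Equiv.Perm.mul_apply]; exact hconj x
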